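/- Let (Z,d) be a metric space. For z ∈ Z define the involution d_z : (Z∖{z}) × (Z∖{z}) → [0,∞) by d_z(a,b) = d(a,b)/(d(a,z)·d(b,z)). Then d_z satisfies the triangle inequality d_z(a,c) ≤ d_z(a,b) + d_z(b,c) for every z ∈ Z and all a, b, c ∈ Z∖{z} if and only if d satisfies the Ptolemy inequality. -/

import Mathlib

/-- The involution `d_z(a,b) = d(a,b)/(d(a,z)·d(b,z))` satisfies the triangle inequality
for every basepoint `z` if and only if `d` satisfies the Ptolemy inequality. -/
theorem involution_triangle_iff_ptolemy {Z : Type*} [MetricSpace Z] :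
    (∀ z a b c : Z, a ≠ z → b ≠ z → c ≠ z →
      dist a c / (dist a z * dist c z) ≤
        dist a b / (dist a z * dist b z) + dist b c / (dist b z * dist c z)) ↔
    (∀ y₁ y₂ y₃ y₄ : Z,
      dist y₁ y₃ * dist y₂ y₄ ≤ dist y₁ y₂ * dist y₃ y₄ + dist y₂ y₃ * dist y₄ y₁) := by
  constructor
  · intro h y₁ y₂ y₃ y₄
    by_cases h1 : y₁ = y₄
    · subst h1
      simp [dist_comm, mul_comm]
    by_cases h2 : y₂ = y₄
    · subst h2
      have : dist y₁ y₂ * dist y₃ y₂ + dist y₂ y₃ * dist y₂ y₁ ≥ 0 := by positivity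
      simpa [dist_comm] using this
    by_cases h3 : y₃ = y₄
    · subst h3
      simp [dist_comm, mul_comm]
    · have key := h y₄ y₁ y₂ y₃ h1 h2 h3
      have p1 : 0 < dist y₁ y₄ := dist_pos.mpr h1
      have p2 : 0 < dist y₂ y₄ := dist_pos.mpr h2
      have p3 : 0 < dist y₃ y₄ := dist_pos.mpr h3
      rw [div_add_div _ _ (by positivity) (by positivity),
        div_le_div_iff₀ (by positivity) (by positivity)] at key
      rw [dist_comm y₄ y₁, ← mul_le_mul_iff_of_pos_right (show (0:ℝ) < dist y₁ y₄ * dist y₂ y₄ * dist y₃ y₄ by positivity)]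
      ring_nf at key ⊢
      linarith [key]
  · intro h z a b c ha hb hc
    have key := h a b c z
    have p1 : 0 < dist a z := dist_pos.mpr ha
    have p2 : 0 < dist b z := dist_pos.mpr hb
    have p3 : 0 < dist c z := dist_pos.mpr hc
    rw [div_add_div _ _ (by positivity) (by positivity),
      div_le_div_iff₀ (by positivity) (by positivity)]
    rw [dist_comm z a] at key
    have := mul_le_mul_of_nonneg_right key (le_of_lt (show (0:ℝ) < dist a z * dist b z * dist c z by positivity))
    ring_nf at this ⊢
    linarith [this]
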